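/- Let P be a definite program and S a specification. If every atom A ∈ S is covered by P w.r.t. S, and P is recurrent w.r.t. some level mapping, then P is complete w.r.t. S, i.e. S ⊆ M_P. -/
import Mathlib


variable {A : Type*}

/-- A ground clause over atoms `A`: a head with a list of body atoms. -/
abbrev ClauseG (A : Type*) := A × List A

/-- `S` is an Herbrand model of the (ground instantiation of the) program `P`. -/
def IsModelG (S : Set A) (P : Set (ClauseG A)) : Prop :=
  ∀ c ∈ P, (∀ b ∈ c.2, b ∈ S) → c.1 ∈ S

/-- The least Herbrand model of `P`. -/
def LHMG (P : Set (ClauseG A)) : Set A := ⋂₀ {S | IsModelG S P}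

/-- A ground atom `H` is covered by `P` w.r.t. `S`. -/
def CoveredG (P : Set (ClauseG A)) (S : Set A) (H : A) : Prop :=
  ∃ c ∈ P, c.1 = H ∧ ∀ b ∈ c.2, b ∈ S

/-- `P` is recurrent w.r.t. the level mapping `lvl`. -/
def RecurrentG (P : Set (ClauseG A)) (lvl : A → ℕ) : Prop :=
  ∀ c ∈ P, ∀ b ∈ c.2, lvl b < lvl c.1

/-- If every atom of `S` is covered by `P` w.r.t. `S` and `P` is recurrent
w.r.t. some level mapping, then `P` is complete w.r.t. `S`: `S ⊆ M_P`. -/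
theorem completeness_criterion (P : Set (ClauseG A)) (S : Set A)
    (hcov : ∀ H ∈ S, CoveredG P S H)
    (lvl : A → ℕ) (hrec : RecurrentG P lvl) : S ⊆ LHMG P := by
  have key : ∀ n, ∀ H ∈ S, lvl H < n → H ∈ LHMG P := by
    intro n
    induction n with
    | zero => intro H _ h; omega
    | succ n ih =>
      intro H hH hlt
      obtain ⟨c, hc, hhead, hbody⟩ := hcov H hH
      intro M hM
      subst hhead
      apply hM c hc
      intro b hb
      have : lvl b < lvl c.1 := hrec c hc b hb
      exact ih b (hbody b hb) (by omega) M hM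
  exact fun H hH => key (lvl H + 1) H hH (by omega)
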